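/- Let σ₋ < σ₊ be real numbers and let f be holomorphic on the open strip {z ∈ ℂ : σ₋ < Im z < σ₊} with |f(z)| ≤ C·(1 + |z|)^{−s} on the strip, for some C > 0 and s > 1. Let ω₋, ω₊ ∈ (σ₋, σ₊), h ∈ ℝ, and ξ ∈ ℂ with ω₋ < Im ξ < ω₊. Then (1/(2πi))·∫_ℝ e^{i·h·(t + iω₊ − ξ)} · f(t + iω₊)/(ξ − t − iω₊) dt = f(ξ) + (1/(2πi))·∫_ℝ e^{i·h·(t + iω₋ − ξ)} · f(t + iω₋)/(ξ − t − iω₋) dt. (Lemma 5.1(b): pushing the contour in the representation of Π⁺_h f(ξ) from the line Im η = ω₊ above ξ down to the line Im η = ω₋ below ξ picks up the residue f(ξ) at the simple pole η = ξ.) -/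

import Mathlib

open MeasureTheory Set Complex intervalIntegral Filter
open scoped Interval Topology

noncomputable def RI (g : ℂ → ℂ) (a c b d : ℝ) : ℂ :=
  (∫ x : ℝ in a..c, g ((x : ℂ) + (b : ℂ) * I)) - (∫ x : ℝ in a..c, g ((x : ℂ) + (d : ℂ) * I)) +
    I • (∫ y : ℝ in b..d, g ((c : ℂ) + (y : ℂ) * I)) -
    I • (∫ y : ℝ in b..d, g ((a : ℂ) + (y : ℂ) * I))

lemma RI_zero (g : ℂ → ℂ) (a c b d : ℝ)
    (H : DifferentiableOn ℂ g ([[a, c]] ×ℂ [[b, d]])) : RI g a c b d = 0 := by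
  have := Complex.integral_boundary_rect_eq_zero_of_differentiableOn g (⟨a, b⟩ : ℂ) (⟨c, d⟩ : ℂ)
    (by simpa using H)
  simpa [RI] using this

lemma RI_add_right (g : ℂ → ℂ) (a c e b d : ℝ)
    (h1 : IntervalIntegrable (fun x : ℝ => g ((x : ℂ) + (b : ℂ) * I)) volume a c)
    (h2 : IntervalIntegrable (fun x : ℝ => g ((x : ℂ) + (b : ℂ) * I)) volume c e)
    (h3 : IntervalIntegrable (fun x : ℝ => g ((x : ℂ) + (d : ℂ) * I)) volume a c)
    (h4 : IntervalIntegrable (fun x : ℝ => g ((x : ℂ) + (d : ℂ) * I)) volume c e) :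
    RI g a e b d = RI g a c b d + RI g c e b d := by
  unfold RI
  rw [← intervalIntegral.integral_add_adjacent_intervals h1 h2,
      ← intervalIntegral.integral_add_adjacent_intervals h3 h4]
  simp only [smul_eq_mul]
  ring

lemma RI_congr (g₁ g₂ : ℂ → ℂ) (a c b d : ℝ)
    (hh : ∀ x ∈ [[a, c]], g₁ ((x : ℂ) + (b : ℂ) * I) = g₂ ((x : ℂ) + (b : ℂ) * I) ∧
      g₁ ((x : ℂ) + (d : ℂ) * I) = g₂ ((x : ℂ) + (d : ℂ) * I))
    (hv : ∀ y ∈ [[b, d]], g₁ ((c : ℂ) + (y : ℂ) * I) = g₂ ((c : ℂ) + (y : ℂ) * I) ∧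
      g₁ ((a : ℂ) + (y : ℂ) * I) = g₂ ((a : ℂ) + (y : ℂ) * I)) :
    RI g₁ a c b d = RI g₂ a c b d := by
  unfold RI
  rw [intervalIntegral.integral_congr (g := fun x : ℝ => g₂ ((x : ℂ) + (b : ℂ) * I))
        (fun x hx => (hh x hx).1),
      intervalIntegral.integral_congr (g := fun x : ℝ => g₂ ((x : ℂ) + (d : ℂ) * I))
        (fun x hx => (hh x hx).2),
      intervalIntegral.integral_congr (g := fun y : ℝ => g₂ ((c : ℂ) + (y : ℂ) * I))
        (fun y hy => (hv y hy).1),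
      intervalIntegral.integral_congr (g := fun y : ℝ => g₂ ((a : ℂ) + (y : ℂ) * I))
        (fun y hy => (hv y hy).2)]

lemma RI_linear (p q : ℂ → ℂ) (k₁ k₂ : ℂ) (a c b d : ℝ)
    (h1 : IntervalIntegrable (fun x : ℝ => p ((x : ℂ) + (b : ℂ) * I)) volume a c)
    (h2 : IntervalIntegrable (fun x : ℝ => p ((x : ℂ) + (d : ℂ) * I)) volume a c)
    (h3 : IntervalIntegrable (fun y : ℝ => p ((c : ℂ) + (y : ℂ) * I)) volume b d)
    (h4 : IntervalIntegrable (fun y : ℝ => p ((a : ℂ) + (y : ℂ) * I)) volume b d)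
    (h5 : IntervalIntegrable (fun x : ℝ => q ((x : ℂ) + (b : ℂ) * I)) volume a c)
    (h6 : IntervalIntegrable (fun x : ℝ => q ((x : ℂ) + (d : ℂ) * I)) volume a c)
    (h7 : IntervalIntegrable (fun y : ℝ => q ((c : ℂ) + (y : ℂ) * I)) volume b d)
    (h8 : IntervalIntegrable (fun y : ℝ => q ((a : ℂ) + (y : ℂ) * I)) volume b d) :
    RI (fun η => k₁ * p η + k₂ * q η) a c b d = k₁ * RI p a c b d + k₂ * RI q a c b d := by
  unfold RI
  rw [intervalIntegral.integral_add (h1.const_mul k₁) (h5.const_mul k₂),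
      intervalIntegral.integral_add (h2.const_mul k₁) (h6.const_mul k₂),
      intervalIntegral.integral_add (h3.const_mul k₁) (h7.const_mul k₂),
      intervalIntegral.integral_add (h4.const_mul k₁) (h8.const_mul k₂),
      intervalIntegral.integral_const_mul, intervalIntegral.integral_const_mul,
      intervalIntegral.integral_const_mul, intervalIntegral.integral_const_mul,
      intervalIntegral.integral_const_mul, intervalIntegral.integral_const_mul,
      intervalIntegral.integral_const_mul, intervalIntegral.integral_const_mul]
  simp only [smul_eq_mul]
  ring

lemma log_sub_log_neg_of_im_pos {z : ℂ} (hz : 0 < z.im) :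
    Complex.log z - Complex.log (-z) = Real.pi * I := by
  apply Complex.ext
  · simp [Complex.log_re]
  · simp [Complex.log_im, Complex.arg_neg_eq_arg_sub_pi_of_im_pos hz]

lemma log_neg_sub_log_of_im_neg {z : ℂ} (hz : z.im < 0) :
    Complex.log (-z) - Complex.log z = Real.pi * I := by
  apply Complex.ext
  · simp [Complex.log_re]
  · simp [Complex.log_im, Complex.arg_neg_eq_arg_add_pi_of_im_neg hz]

lemma horiz_ftc (ξ : ℂ) (a c ω : ℝ) (hω : ω ≠ ξ.im) :
    ∫ x : ℝ in a..c, ((x : ℂ) + (ω : ℂ) * I - ξ)⁻¹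
      = Complex.log ((c : ℂ) + (ω : ℂ) * I - ξ) - Complex.log ((a : ℂ) + (ω : ℂ) * I - ξ) := by
  have hne : ∀ x : ℝ, ((x : ℂ) + (ω : ℂ) * I - ξ) ≠ 0 := by
    intro x hx
    apply hω
    have := congrArg Complex.im hx
    simpa [sub_eq_zero] using this
  have hmem : ∀ x : ℝ, ((x : ℂ) + (ω : ℂ) * I - ξ) ∈ Complex.slitPlane := by
    intro x
    rw [Complex.mem_slitPlane_iff]
    right; simpa [sub_eq_zero] using hω
  apply intervalIntegral.integral_eq_sub_of_hasDerivAt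
  · intro x _
    have h0 : HasDerivAt (fun z : ℂ => z + (ω : ℂ) * I - ξ) 1 (x : ℂ) :=
      ((hasDerivAt_id _).add_const _).sub_const _
    have := ((Complex.hasDerivAt_log (hmem x)).comp (x : ℂ) h0).comp_ofReal
    simpa using this
  · apply ContinuousOn.intervalIntegrable
    exact (((Complex.continuous_ofReal.add continuous_const).sub continuous_const).inv₀
      (fun x => hne x)).continuousOn

lemma vert_ftc_right (ξ : ℂ) (b d r : ℝ) (hr : ξ.re < r) :
    ∫ y : ℝ in b..d, I * ((r : ℂ) + (y : ℂ) * I - ξ)⁻¹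
      = Complex.log ((r : ℂ) + (d : ℂ) * I - ξ) - Complex.log ((r : ℂ) + (b : ℂ) * I - ξ) := by
  have hmem : ∀ y : ℝ, ((r : ℂ) + (y : ℂ) * I - ξ) ∈ Complex.slitPlane := by
    intro y
    rw [Complex.mem_slitPlane_iff]
    left; simpa using sub_pos.mpr hr
  have hne : ∀ y : ℝ, ((r : ℂ) + (y : ℂ) * I - ξ) ≠ 0 :=
    fun y => Complex.slitPlane_ne_zero (hmem y)
  apply intervalIntegral.integral_eq_sub_of_hasDerivAt
  · intro y _
    have h0 : HasDerivAt (fun z : ℂ => (r : ℂ) + z * I - ξ) I (y : ℂ) := by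
      simpa using (((hasDerivAt_id ((y : ℝ) : ℂ)).mul_const I).const_add (r : ℂ)).sub_const ξ
    have := ((Complex.hasDerivAt_log (hmem y)).comp ((y : ℝ) : ℂ) h0).comp_ofReal
    simpa [mul_comm] using this
  · apply ContinuousOn.intervalIntegrable
    exact (continuous_const.mul (((continuous_const.add
      (Complex.continuous_ofReal.mul continuous_const)).sub continuous_const).inv₀
      (fun y => hne y))).continuousOn

lemma vert_ftc_left (ξ : ℂ) (b d r : ℝ) (hr : r < ξ.re) :
    ∫ y : ℝ in b..d, I * ((r : ℂ) + (y : ℂ) * I - ξ)⁻¹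
      = Complex.log (-((r : ℂ) + (d : ℂ) * I - ξ)) -
        Complex.log (-((r : ℂ) + (b : ℂ) * I - ξ)) := by
  have hmem : ∀ y : ℝ, (-((r : ℂ) + (y : ℂ) * I - ξ)) ∈ Complex.slitPlane := by
    intro y
    rw [Complex.mem_slitPlane_iff]
    left; simpa using sub_pos.mpr hr
  have hne : ∀ y : ℝ, ((r : ℂ) + (y : ℂ) * I - ξ) ≠ 0 := by
    intro y hy
    exact Complex.slitPlane_ne_zero (hmem y) (by rw [hy]; simp)
  apply intervalIntegral.integral_eq_sub_of_hasDerivAt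
  · intro y _
    have h0 : HasDerivAt (fun z : ℂ => -((r : ℂ) + z * I - ξ)) (-I) (y : ℂ) := by
      simpa [Pi.neg_def] using ((((hasDerivAt_id ((y : ℝ) : ℂ)).mul_const I).const_add (r : ℂ)).sub_const ξ).neg
    have h1 := ((Complex.hasDerivAt_log (hmem y)).comp ((y : ℝ) : ℂ) h0).comp_ofReal
    have h2 : (-((r : ℂ) + ((y : ℝ) : ℂ) * I - ξ))⁻¹ * (-I)
        = I * ((r : ℂ) + ((y : ℝ) : ℂ) * I - ξ)⁻¹ := by
      rw [inv_neg]; ring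
    rw [h2] at h1
    exact h1
  · apply ContinuousOn.intervalIntegrable
    exact (continuous_const.mul (((continuous_const.add
      (Complex.continuous_ofReal.mul continuous_const)).sub continuous_const).inv₀
      (fun y => hne y))).continuousOn

lemma RI_inv (ξ : ℂ) (a c b d : ℝ) (ha : a < ξ.re) (hc : ξ.re < c) (hb : b < ξ.im)
    (hd : ξ.im < d) :
    RI (fun η => (η - ξ)⁻¹) a c b d = 2 * Real.pi * I := by
  unfold RI
  rw [horiz_ftc ξ a c b (ne_of_lt hb), horiz_ftc ξ a c d (ne_of_gt hd)]
  have hR : (I • ∫ y : ℝ in b..d, ((c : ℂ) + (y : ℂ) * I - ξ)⁻¹)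
      = Complex.log ((c : ℂ) + (d : ℂ) * I - ξ) - Complex.log ((c : ℂ) + (b : ℂ) * I - ξ) := by
    rw [smul_eq_mul, ← intervalIntegral.integral_const_mul, vert_ftc_right ξ b d c hc]
  have hL : (I • ∫ y : ℝ in b..d, ((a : ℂ) + (y : ℂ) * I - ξ)⁻¹)
      = Complex.log (-((a : ℂ) + (d : ℂ) * I - ξ)) -
        Complex.log (-((a : ℂ) + (b : ℂ) * I - ξ)) := by
    rw [smul_eq_mul, ← intervalIntegral.integral_const_mul, vert_ftc_left ξ b d a ha]
  rw [hR, hL]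
  have h1 : Complex.log ((a : ℂ) + (d : ℂ) * I - ξ) - Complex.log (-((a : ℂ) + (d : ℂ) * I - ξ))
      = Real.pi * I := log_sub_log_neg_of_im_pos (by simpa using sub_pos.mpr hd)
  have h2 : Complex.log (-((a : ℂ) + (b : ℂ) * I - ξ)) - Complex.log ((a : ℂ) + (b : ℂ) * I - ξ)
      = Real.pi * I := log_neg_sub_log_of_im_neg (by simpa using sub_neg.mpr hb)
  linear_combination h1 + h2

theorem stmt_12 (σm σp : ℝ) (hσ : σm < σp) (f : ℂ → ℂ) (C s : ℝ) (hC : 0 < C) (hs : 1 < s)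
    (hf : DifferentiableOn ℂ f {z : ℂ | σm < z.im ∧ z.im < σp})
    (hbound : ∀ z : ℂ, σm < z.im → z.im < σp →
      ‖f z‖ ≤ C * (1 + ‖z‖) ^ (-s))
    (ωm ωp : ℝ) (hωm : ωm ∈ Ioo σm σp) (hωp : ωp ∈ Ioo σm σp)
    (h : ℝ) (ξ : ℂ) (hξ₁ : ωm < ξ.im) (hξ₂ : ξ.im < ωp) :
    (2 * (Real.pi : ℂ) * Complex.I)⁻¹ *
        (∫ t : ℝ, Complex.exp (Complex.I * h * ((t : ℂ) + ωp * Complex.I - ξ)) *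
          f ((t : ℂ) + ωp * Complex.I) / (ξ - t - ωp * Complex.I))
      = f ξ + (2 * (Real.pi : ℂ) * Complex.I)⁻¹ *
          ∫ t : ℝ, Complex.exp (Complex.I * h * ((t : ℂ) + ωm * Complex.I - ξ)) *
            f ((t : ℂ) + ωm * Complex.I) / (ξ - t - ωm * Complex.I) := by
  have hωmp : ωm < ωp := lt_trans hξ₁ hξ₂
  obtain ⟨hσωm, hωmσ⟩ := hωm
  obtain ⟨hσωp, hωpσ⟩ := hωp
  have hσξ₁ : σm < ξ.im := lt_trans hσωm hξ₁
  have hσξ₂ : ξ.im < σp := lt_trans hξ₂ hωpσ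
  set F : ℂ → ℂ := fun η => Complex.exp (I * (h : ℂ) * (η - ξ)) * f η with hFdef
  set g : ℂ → ℂ := fun η => F η / (ξ - η) with hgdef
  set R₀ : ℝ := |ξ.re| + 1 with hR₀def
  have hR₀1 : (1 : ℝ) ≤ R₀ := by
    have := abs_nonneg ξ.re; simp only [hR₀def]; linarith
  have hR₀r : ξ.re < R₀ := by
    have := le_abs_self ξ.re; simp only [hR₀def]; linarith
  have hR₀l : -R₀ < ξ.re := by
    have := neg_abs_le ξ.re; simp only [hR₀def]; linarith
  have hSopen : IsOpen {z : ℂ | σm < z.im ∧ z.im < σp} := by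
    have he : {z : ℂ | σm < z.im ∧ z.im < σp} = Complex.im ⁻¹' Ioo σm σp := rfl
    rw [he]; exact isOpen_Ioo.preimage Complex.continuous_im
  have hξS : ξ ∈ {z : ℂ | σm < z.im ∧ z.im < σp} := ⟨hσξ₁, hσξ₂⟩
  -- auxiliary ne lemmas
  have hne_im : ∀ (x ω : ℝ), ω ≠ ξ.im → ((x : ℂ) + (ω : ℂ) * I) ≠ ξ := by
    intro x ω hω e
    exact hω (by have := congrArg Complex.im e; simpa using this)
  have hne_re : ∀ (x y : ℝ), x ≠ ξ.re → ((x : ℂ) + (y : ℂ) * I) ≠ ξ := by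
    intro x y hx e
    exact hx (by have := congrArg Complex.re e; simpa using this)
  have hmne : ωm ≠ ξ.im := ne_of_lt hξ₁
  have hpne : ωp ≠ ξ.im := ne_of_gt hξ₂
  -- differentiability of F and g
  have hFd : DifferentiableOn ℂ F {z : ℂ | σm < z.im ∧ z.im < σp} := by
    rw [hFdef]
    exact (((differentiable_id.sub_const ξ).const_mul (I * (h : ℂ))).cexp).differentiableOn.mul hf
  have hgd : DifferentiableOn ℂ g ({z : ℂ | σm < z.im ∧ z.im < σp} \ {ξ}) := by
    rw [hgdef]
    apply DifferentiableOn.div (hFd.mono diff_subset)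
    · exact ((differentiable_const ξ).sub differentiable_id).differentiableOn
    · intro η hη
      exact sub_ne_zero_of_ne (Ne.symm (by simpa using hη.2))
  have hdsl : DifferentiableOn ℂ (dslope F ξ) {z : ℂ | σm < z.im ∧ z.im < σp} :=
    (differentiableOn_dslope (hSopen.mem_nhds hξS)).mpr hFd
  -- continuity on the punctured strip
  have hgC : ContinuousOn g ({z : ℂ | σm < z.im ∧ z.im < σp} \ {ξ}) := hgd.continuousOn
  have hdslC : ContinuousOn (dslope F ξ) ({z : ℂ | σm < z.im ∧ z.im < σp} \ {ξ}) :=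
    (hdsl.continuousOn).mono diff_subset
  have hinvC : ContinuousOn (fun η : ℂ => (η - ξ)⁻¹)
      ({z : ℂ | σm < z.im ∧ z.im < σp} \ {ξ}) := by
    apply ContinuousOn.inv₀ (continuous_id.sub continuous_const).continuousOn
    intro η hη
    exact sub_ne_zero_of_ne (by simpa using hη.2)
  -- interval integrability helpers
  have hIIh : ∀ (G : ℂ → ℂ), ContinuousOn G ({z : ℂ | σm < z.im ∧ z.im < σp} \ {ξ}) →
      ∀ (q r ω : ℝ), σm < ω → ω < σp → ω ≠ ξ.im →
      IntervalIntegrable (fun x : ℝ => G ((x : ℂ) + (ω : ℂ) * I)) volume q r := by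
    intro G hG q r ω h1 h2 h3
    apply ContinuousOn.intervalIntegrable
    apply hG.comp (Complex.continuous_ofReal.add continuous_const).continuousOn
    intro x _
    exact ⟨⟨by simpa using h1, by simpa using h2⟩, by simpa using hne_im x ω h3⟩
  have hIIv : ∀ (G : ℂ → ℂ), ContinuousOn G ({z : ℂ | σm < z.im ∧ z.im < σp} \ {ξ}) →
      ∀ (r : ℝ), r ≠ ξ.re →
      IntervalIntegrable (fun y : ℝ => G ((r : ℂ) + (y : ℂ) * I)) volume ωm ωp := by
    intro G hG r hr
    apply ContinuousOn.intervalIntegrable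
    apply hG.comp (continuous_const.add (Complex.continuous_ofReal.mul continuous_const)).continuousOn
    intro y hy
    rw [uIcc_of_le hωmp.le] at hy
    refine ⟨⟨by show σm < ((r : ℂ) + (y : ℂ) * I).im; simp only [Complex.add_im, Complex.ofReal_re, Complex.mul_im, Complex.ofReal_im,
      Complex.I_im, Complex.I_re, Complex.ofReal_re]; simp; linarith [hy.1], ?_⟩,
      by simpa using hne_re r y hr⟩
    show ((r : ℂ) + (y : ℂ) * I).im < σp; simp only [Complex.add_im]; simp; linarith [hy.2]
  -- the fixed rectangle: residue computation
  have hsub₀ : [[(-R₀ : ℝ), R₀]] ×ℂ [[ωm, ωp]] ⊆ {z : ℂ | σm < z.im ∧ z.im < σp} := by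
    intro z hz
    rw [Complex.mem_reProdIm, uIcc_of_le hωmp.le] at hz
    exact ⟨lt_of_lt_of_le hσωm hz.2.1, lt_of_le_of_lt hz.2.2 hωpσ⟩
  have hVds : RI (dslope F ξ) (-R₀) R₀ ωm ωp = 0 :=
    RI_zero _ _ _ _ _ (hdsl.mono hsub₀)
  have hVinv : RI (fun η => (η - ξ)⁻¹) (-R₀) R₀ ωm ωp = 2 * Real.pi * I :=
    RI_inv ξ _ _ _ _ hR₀l hR₀r hξ₁ hξ₂
  have hFξ : F ξ = f ξ := by rw [hFdef]; simp
  have hg_eq : ∀ η : ℂ, η ≠ ξ →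
      g η = (-1 : ℂ) * dslope F ξ η + (-f ξ) * (η - ξ)⁻¹ := by
    intro η hη
    have hne : η - ξ ≠ 0 := sub_ne_zero_of_ne hη
    have hne' : ξ - η ≠ 0 := sub_ne_zero_of_ne (Ne.symm hη)
    rw [hgdef, dslope_of_ne F hη, slope_def_field, ← hFξ]
    field_simp
    ring
  have hVg : RI g (-R₀) R₀ ωm ωp = -(2 * (Real.pi : ℂ) * I) * f ξ := by
    have hcong : RI g (-R₀) R₀ ωm ωp =
        RI (fun η => (-1 : ℂ) * dslope F ξ η + (-f ξ) * (η - ξ)⁻¹) (-R₀) R₀ ωm ωp := by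
      apply RI_congr
      · intro x _
        exact ⟨hg_eq _ (hne_im x ωm hmne), hg_eq _ (hne_im x ωp hpne)⟩
      · intro y _
        exact ⟨hg_eq _ (hne_re R₀ y (ne_of_gt hR₀r)),
          hg_eq _ (hne_re (-R₀) y (ne_of_lt hR₀l))⟩
    rw [hcong, RI_linear (dslope F ξ) (fun η => (η - ξ)⁻¹) (-1) (-f ξ) (-R₀) R₀ ωm ωp
        (hIIh _ hdslC _ _ _ hσωm hωmσ hmne) (hIIh _ hdslC _ _ _ hσωp hωpσ hpne)
        (hIIv _ hdslC _ (ne_of_gt hR₀r)) (hIIv _ hdslC _ (ne_of_lt hR₀l))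
        (hIIh _ hinvC _ _ _ hσωm hωmσ hmne) (hIIh _ hinvC _ _ _ hσωp hωpσ hpne)
        (hIIv _ hinvC _ (ne_of_gt hR₀r)) (hIIv _ hinvC _ (ne_of_lt hR₀l)),
      hVds, hVinv]
    ring
  -- constancy of the rectangle integral in R
  have hrectsub : ∀ (u v : ℝ), u ≤ v → (ξ.re < u ∨ v < ξ.re) →
      [[u, v]] ×ℂ [[ωm, ωp]] ⊆ {z : ℂ | σm < z.im ∧ z.im < σp} \ {ξ} := by
    intro u v huv hcase z hz
    rw [Complex.mem_reProdIm, uIcc_of_le huv, uIcc_of_le hωmp.le] at hz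
    refine ⟨⟨lt_of_lt_of_le hσωm hz.2.1, lt_of_le_of_lt hz.2.2 hωpσ⟩, ?_⟩
    simp only [mem_singleton_iff]
    intro e
    rcases hcase with hc | hc
    · have := hz.1.1; rw [e] at this; linarith
    · have := hz.1.2; rw [e] at this; linarith
  have hconst : ∀ R : ℝ, R₀ ≤ R → RI g (-R) R ωm ωp = -(2 * (Real.pi : ℂ) * I) * f ξ := by
    intro R hR
    have e1 : RI g (-R) R ωm ωp = RI g (-R) (-R₀) ωm ωp + RI g (-R₀) R ωm ωp :=
      RI_add_right g _ _ _ _ _ (hIIh g hgC _ _ _ hσωm hωmσ hmne)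
        (hIIh g hgC _ _ _ hσωm hωmσ hmne) (hIIh g hgC _ _ _ hσωp hωpσ hpne)
        (hIIh g hgC _ _ _ hσωp hωpσ hpne)
    have e2 : RI g (-R₀) R ωm ωp = RI g (-R₀) R₀ ωm ωp + RI g R₀ R ωm ωp :=
      RI_add_right g _ _ _ _ _ (hIIh g hgC _ _ _ hσωm hωmσ hmne)
        (hIIh g hgC _ _ _ hσωm hωmσ hmne) (hIIh g hgC _ _ _ hσωp hωpσ hpne)
        (hIIh g hgC _ _ _ hσωp hωpσ hpne)
    have z1 : RI g (-R) (-R₀) ωm ωp = 0 :=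
      RI_zero _ _ _ _ _ (hgd.mono (hrectsub (-R) (-R₀) (by linarith) (Or.inr hR₀l)))
    have z2 : RI g R₀ R ωm ωp = 0 :=
      RI_zero _ _ _ _ _ (hgd.mono (hrectsub R₀ R hR (Or.inl hR₀r)))
    rw [e1, e2, z1, z2, hVg]
    ring
  -- continuity along horizontal lines
  have hlineCont : ∀ ω : ℝ, σm < ω → ω < σp → ω ≠ ξ.im →
      Continuous (fun t : ℝ => g ((t : ℂ) + (ω : ℂ) * I)) := by
    intro ω h1 h2 h3
    rw [← continuousOn_univ]
    apply hgC.comp (Complex.continuous_ofReal.add continuous_const).continuousOn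
    intro t _
    exact ⟨⟨by simpa using h1, by simpa using h2⟩, by simpa using hne_im t ω h3⟩
  set M : ℝ := Real.exp (|h| * (|ωm| + |ωp| + |ξ.im|)) with hMdef
  have hM0 : 0 < M := Real.exp_pos _
  have hexpb : ∀ η : ℂ, ωm ≤ η.im → η.im ≤ ωp →
      ‖Complex.exp (I * (h : ℂ) * (η - ξ))‖ ≤ M := by
    intro η h1 h2
    rw [Complex.norm_exp, hMdef]
    apply Real.exp_le_exp.mpr
    have hre : (I * (h : ℂ) * (η - ξ)).re = -(h * (η.im - ξ.im)) := by
      simp [Complex.mul_re, Complex.mul_im]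
    rw [hre]
    have h3 : |η.im| ≤ |ωm| + |ωp| := by
      rw [abs_le]
      constructor
      · have := neg_abs_le ωm; have := abs_nonneg ωp; linarith
      · have := le_abs_self ωp; have := abs_nonneg ωm; linarith
    calc -(h * (η.im - ξ.im)) ≤ |h * (η.im - ξ.im)| := neg_le_abs _
      _ = |h| * |η.im - ξ.im| := abs_mul _ _
      _ ≤ |h| * (|ωm| + |ωp| + |ξ.im|) := by
          apply mul_le_mul_of_nonneg_left _ (abs_nonneg h)
          have h4 : |η.im - ξ.im| ≤ |η.im| + |ξ.im| := by
            rw [sub_eq_add_neg]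
            exact (abs_add_le _ _).trans_eq (by rw [abs_neg])
          linarith
  -- integrability on horizontal lines
  have hInt : ∀ ω : ℝ, σm < ω → ω < σp → ωm ≤ ω → ω ≤ ωp → ω ≠ ξ.im →
      Integrable (fun t : ℝ => g ((t : ℂ) + (ω : ℂ) * I)) := by
    intro ω h1 h2 h4 h5 h3
    have hfin : ((Module.finrank ℝ ℝ : ℝ)) < s := by simpa using hs
    have hdne : ξ.im - ω ≠ 0 := sub_ne_zero_of_ne (Ne.symm h3)
    have hdpos : 0 < |ξ.im - ω| := abs_pos.2 hdne
    refine ((integrable_one_add_norm hfin).const_mul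
      (M * C / |ξ.im - ω|)).mono' (hlineCont ω h1 h2 h3).aestronglyMeasurable (ae_of_all _ ?_)
    intro t
    have habs_t : |t| ≤ ‖(t : ℂ) + (ω : ℂ) * I‖ := by
      have := Complex.abs_re_le_norm ((t : ℂ) + (ω : ℂ) * I)
      simpa using this
    have hden : |ξ.im - ω| ≤ ‖ξ - ((t : ℂ) + (ω : ℂ) * I)‖ := by
      have := Complex.abs_im_le_norm (ξ - ((t : ℂ) + (ω : ℂ) * I))
      simpa using this
    have hfb2 : ‖f ((t : ℂ) + (ω : ℂ) * I)‖ ≤ C * (1 + |t|) ^ (-s) := by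
      refine (hbound _ (by simpa using h1) (by simpa using h2)).trans ?_
      apply mul_le_mul_of_nonneg_left _ hC.le
      exact Real.rpow_le_rpow_of_nonpos (by positivity) (by linarith) (by linarith)
    calc ‖g ((t : ℂ) + (ω : ℂ) * I)‖
        = ‖Complex.exp (I * (h : ℂ) * (((t : ℂ) + (ω : ℂ) * I) - ξ))‖ *
            ‖f ((t : ℂ) + (ω : ℂ) * I)‖ /
            ‖ξ - ((t : ℂ) + (ω : ℂ) * I)‖ := by
          simp only [hgdef, hFdef, norm_div, norm_mul]
      _ ≤ M * (C * (1 + |t|) ^ (-s)) / |ξ.im - ω| := by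
          apply div_le_div₀ (by positivity) _ hdpos hden
          exact mul_le_mul (hexpb _ (by simpa using h4) (by simpa using h5)) hfb2
            (norm_nonneg _) hM0.le
      _ = M * C / |ξ.im - ω| * (1 + ‖t‖) ^ (-s) := by
          rw [Real.norm_eq_abs]; ring
  -- limits of top and bottom integrals
  have hbotT : Tendsto (fun R : ℝ => ∫ x : ℝ in (-R)..R, g ((x : ℂ) + (ωm : ℂ) * I)) atTop
      (𝓝 (∫ t : ℝ, g ((t : ℂ) + (ωm : ℂ) * I))) :=
    intervalIntegral_tendsto_integral (hInt ωm hσωm hωmσ le_rfl hωmp.le hmne)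
      tendsto_neg_atTop_atBot tendsto_id
  have htopT : Tendsto (fun R : ℝ => ∫ x : ℝ in (-R)..R, g ((x : ℂ) + (ωp : ℂ) * I)) atTop
      (𝓝 (∫ t : ℝ, g ((t : ℂ) + (ωp : ℂ) * I))) :=
    intervalIntegral_tendsto_integral (hInt ωp hσωp hωpσ hωmp.le le_rfl hpne)
      tendsto_neg_atTop_atBot tendsto_id
  -- side bound
  have hside : ∀ (r R : ℝ), R₀ ≤ R → |r| = R →
      ‖(I : ℂ) • ∫ y : ℝ in ωm..ωp, g ((r : ℂ) + (y : ℂ) * I)‖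
        ≤ M * C * |ωp - ωm| * (1 + R)⁻¹ := by
    intro r R hR hrR
    have h1R : (1 : ℝ) ≤ R := le_trans hR₀1 hR
    have hb : ∀ y ∈ Ι ωm ωp, ‖g ((r : ℂ) + (y : ℂ) * I)‖ ≤ M * C * (1 + R)⁻¹ := by
      intro y hy
      rw [uIoc_of_le hωmp.le] at hy
      have habs : R ≤ ‖(r : ℂ) + (y : ℂ) * I‖ := by
        have := Complex.abs_re_le_norm ((r : ℂ) + (y : ℂ) * I)
        rw [show ((r : ℂ) + (y : ℂ) * I).re = r by simp, hrR] at this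
        exact this
      have hden : 1 ≤ ‖ξ - ((r : ℂ) + (y : ℂ) * I)‖ := by
        have h5 : |r| - |ξ.re| ≤ |r - ξ.re| := abs_sub_abs_le_abs_sub r ξ.re
        have h6 : |ξ.re - r| ≤ ‖ξ - ((r : ℂ) + (y : ℂ) * I)‖ := by
          have := Complex.abs_re_le_norm (ξ - ((r : ℂ) + (y : ℂ) * I))
          simpa using this
        have h7 : |r - ξ.re| = |ξ.re - r| := abs_sub_comm _ _
        rw [hrR] at h5
        have h8 : |ξ.re| + 1 ≤ R := by rw [← hR₀def]; exact hR
        linarith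
      have hfb2 : ‖f ((r : ℂ) + (y : ℂ) * I)‖ ≤ C * (1 + R) ^ (-s) := by
        refine (hbound _ (by simp; linarith [hy.1]) (by simp; linarith [hy.2])).trans ?_
        apply mul_le_mul_of_nonneg_left _ hC.le
        exact Real.rpow_le_rpow_of_nonpos (by linarith) (by linarith) (by linarith)
      have hrp : ((1 : ℝ) + R) ^ (-s) ≤ (1 + R)⁻¹ := by
        have := Real.rpow_le_rpow_of_exponent_le (x := 1 + R) (by linarith)
          (by linarith : -s ≤ -1)
        rwa [Real.rpow_neg_one] at this
      calc ‖g ((r : ℂ) + (y : ℂ) * I)‖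
          = ‖Complex.exp (I * (h : ℂ) * (((r : ℂ) + (y : ℂ) * I) - ξ))‖ *
              ‖f ((r : ℂ) + (y : ℂ) * I)‖ /
              ‖ξ - ((r : ℂ) + (y : ℂ) * I)‖ := by
            simp only [hgdef, hFdef, norm_div, norm_mul]
        _ ≤ M * (C * (1 + R) ^ (-s)) / 1 := by
            apply div_le_div₀ (by positivity) _ one_pos hden
            exact mul_le_mul (hexpb _ (by simp; linarith [hy.1]) (by simp; linarith [hy.2]))
              hfb2 (norm_nonneg _) hM0.le
        _ = M * (C * (1 + R) ^ (-s)) := div_one _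
        _ ≤ M * (C * (1 + R)⁻¹) :=
            mul_le_mul_of_nonneg_left (mul_le_mul_of_nonneg_left hrp hC.le) hM0.le
        _ = M * C * (1 + R)⁻¹ := by ring
    calc ‖(I : ℂ) • ∫ y : ℝ in ωm..ωp, g ((r : ℂ) + (y : ℂ) * I)‖
        = ‖∫ y : ℝ in ωm..ωp, g ((r : ℂ) + (y : ℂ) * I)‖ := by
          rw [norm_smul]; simp
      _ ≤ M * C * (1 + R)⁻¹ * |ωp - ωm| := intervalIntegral.norm_integral_le_of_norm_le_const hb
      _ = M * C * |ωp - ωm| * (1 + R)⁻¹ := by ring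
  have hBtend : Tendsto (fun R : ℝ => M * C * |ωp - ωm| * (1 + R)⁻¹) atTop (𝓝 0) := by
    have h0 : Tendsto (fun R : ℝ => (1 + R)⁻¹) atTop (𝓝 0) :=
      Tendsto.inv_tendsto_atTop (tendsto_atTop_add_const_left atTop 1 tendsto_id)
    simpa using h0.const_mul (M * C * |ωp - ωm|)
  have hsR : Tendsto (fun R : ℝ => (I : ℂ) • ∫ y : ℝ in ωm..ωp, g ((R : ℂ) + (y : ℂ) * I))
      atTop (𝓝 0) := by
    apply squeeze_zero_norm' _ hBtend
    filter_upwards [eventually_ge_atTop R₀] with R hR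
    exact hside R R hR (abs_of_nonneg (by linarith))
  have hsL : Tendsto (fun R : ℝ => (I : ℂ) • ∫ y : ℝ in ωm..ωp, g ((↑(-R) : ℂ) + (y : ℂ) * I))
      atTop (𝓝 0) := by
    apply squeeze_zero_norm' _ hBtend
    filter_upwards [eventually_ge_atTop R₀] with R hR
    exact hside (-R) R hR (by rw [abs_neg]; exact abs_of_nonneg (by linarith))
  -- pass to the limit
  have hTend : Tendsto (fun R : ℝ => RI g (-R) R ωm ωp) atTop
      (𝓝 ((∫ t : ℝ, g ((t : ℂ) + (ωm : ℂ) * I)) - (∫ t : ℝ, g ((t : ℂ) + (ωp : ℂ) * I))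
        + 0 - 0)) := by
    unfold RI
    exact ((hbotT.sub htopT).add hsR).sub hsL
  have hTend' : Tendsto (fun R : ℝ => RI g (-R) R ωm ωp) atTop
      (𝓝 (-(2 * (Real.pi : ℂ) * I) * f ξ)) := by
    apply Tendsto.congr' _ tendsto_const_nhds
    filter_upwards [eventually_ge_atTop R₀] with R hR
    exact (hconst R hR).symm
  have hkey := tendsto_nhds_unique hTend hTend'
  rw [add_zero, sub_zero] at hkey
  simp only [hgdef, hFdef] at hkey
  simp only [sub_sub]
  have h2πne : (2 * (Real.pi : ℂ) * I) ≠ 0 := Complex.two_pi_I_ne_zero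
  have hIp : (∫ t : ℝ, Complex.exp (I * (h : ℂ) * (((t : ℂ) + (ωp : ℂ) * I) - ξ)) *
        f ((t : ℂ) + (ωp : ℂ) * I) / (ξ - ((t : ℂ) + (ωp : ℂ) * I)))
      = (∫ t : ℝ, Complex.exp (I * (h : ℂ) * (((t : ℂ) + (ωm : ℂ) * I) - ξ)) *
        f ((t : ℂ) + (ωm : ℂ) * I) / (ξ - ((t : ℂ) + (ωm : ℂ) * I)))
        + 2 * (Real.pi : ℂ) * I * f ξ := by
    linear_combination -hkey
  rw [hIp]
  field_simp
  ring
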